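/- Let w be a permutation of {1,…,n} fixed under quarter-turn (90°) rotation of its permutation matrix. Then for every j ∈ {1,…,n}, the entry of w at position j is a right-to-left maximum of w if and only if the entry of w at position w⁻¹(j) (i.e., the value j itself) is a left-to-right maximum of w. -/

import Mathlib

/-- The entry of the word `l` at (1-indexed) position `i`, i.e. `w(i)`. -/
def entry (l : List ℕ) (i : ℕ) : ℕ := l.getD (i - 1) 0

/-- `l` is the one-line notation of a permutation of `{1,…,n}`. -/
def IsPermWord (n : ℕ) (l : List ℕ) : Prop := l.Perm (List.range' 1 n)

/-- `l` is a Baxter permutation of length `n`: a permutation of `{1,…,n}`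
avoiding the vincular patterns 3-14-2 and 2-41-3. -/
def IsBaxter (n : ℕ) (l : List ℕ) : Prop :=
  IsPermWord n l ∧
  (¬ ∃ i j k, 1 ≤ i ∧ i < j ∧ j + 1 < k ∧ k ≤ n ∧
      entry l j < entry l k ∧ entry l k < entry l i ∧ entry l i < entry l (j + 1)) ∧
  (¬ ∃ i j k, 1 ≤ i ∧ i < j ∧ j + 1 < k ∧ k ≤ n ∧
      entry l (j + 1) < entry l i ∧ entry l i < entry l k ∧ entry l k < entry l j)

/-- `l` is fixed under quarter-turn (90°) rotation of its permutation matrix: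
`w(w(i)) = n+1-i` for all `i ∈ {1,…,n}`. -/
def QuarterFixed (n : ℕ) (l : List ℕ) : Prop :=
  ∀ i, 1 ≤ i → i ≤ n → entry l (entry l i) = n + 1 - i

/-- `l` is fixed under half-turn (180°) rotation of its permutation matrix:
`w(n+1-i) = n+1-w(i)` for all `i ∈ {1,…,n}`. -/
def HalfFixed (n : ℕ) (l : List ℕ) : Prop :=
  ∀ i, 1 ≤ i → i ≤ n → entry l (n + 1 - i) = n + 1 - entry l i

/-- The entry at position `i` is a left-to-right maximum. -/
def LRMaxAt (l : List ℕ) (i : ℕ) : Prop := ∀ k, 1 ≤ k → k < i → entry l k < entry l i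

/-- The entry at position `i` is a right-to-left maximum. -/
def RLMaxAt (n : ℕ) (l : List ℕ) (i : ℕ) : Prop := ∀ k, i < k → k ≤ n → entry l k < entry l i

/-- The entry at position `i` is a left-to-right minimum. -/
def LRMinAt (l : List ℕ) (i : ℕ) : Prop := ∀ k, 1 ≤ k → k < i → entry l i < entry l k

/-- The entry at position `i` is a right-to-left minimum. -/
def RLMinAt (n : ℕ) (l : List ℕ) (i : ℕ) : Prop := ∀ k, i < k → k ≤ n → entry l i < entry l k

/-- The (1-indexed) position of the value `v` in `l`, i.e. `w⁻¹(v)`. -/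
def pos (l : List ℕ) (v : ℕ) : ℕ := l.idxOf v + 1

/-- The one-line notation of the inverse of the permutation `l` of `{1,…,n}`. -/
def invWord (n : ℕ) (l : List ℕ) : List ℕ := (List.range' 1 n).map (pos l)

/-- The number of descents of a permutation word of length `n`:
indices `i ∈ {1,…,n-1}` with `w(i) > w(i+1)`. -/
noncomputable def des (n : ℕ) (l : List ℕ) : ℕ :=
  {i : ℕ | 1 ≤ i ∧ i + 1 ≤ n ∧ entry l (i + 1) < entry l i}.ncard

/-- Insert a new largest label `n+1` at (1-indexed) position `p`
in the permutation `l` of `{1,…,n}`. -/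
def insertMax (n p : ℕ) (l : List ℕ) : List ℕ := l.insertIdx (p - 1) (n + 1)

/-- Insert a new smallest label `1` at (1-indexed) position `p`
(all old labels get increased by 1). -/
def insertMin (p : ℕ) (l : List ℕ) : List ℕ := (l.map (· + 1)).insertIdx (p - 1) 1

/-- Append the value `j` at the end of the permutation `l`
(old labels `≥ j` get increased by 1). -/
def appendEnd (j : ℕ) (l : List ℕ) : List ℕ :=
  (l.map (fun x => if x < j then x else x + 1)) ++ [j]

/-- Standardize a word with distinct entries: replace the entries by `1,…,m` preserving
relative order (each entry is replaced by the number of entries less than or equal to it). -/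
def standardize (l : List ℕ) : List ℕ := l.map (fun x => (l.filter (fun y => y ≤ x)).length)


section Aux

variable {n : ℕ} {l : List ℕ}

theorem aux_length (hl : IsPermWord n l) : l.length = n := by
  simpa using hl.length_eq

theorem aux_mem (hl : IsPermWord n l) (v : ℕ) : v ∈ l ↔ 1 ≤ v ∧ v ≤ n := by
  rw [hl.mem_iff, List.mem_range'_1]; omega

theorem aux_nodup (hl : IsPermWord n l) : l.Nodup :=
  hl.nodup_iff.mpr (List.nodup_range' (s := 1) (n := n))

theorem aux_entry_getElem (hl : IsPermWord n l) {i : ℕ} (h1 : 1 ≤ i) (h2 : i ≤ n) :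
    ∃ h : i - 1 < l.length, entry l i = l[i-1] := by
  have hlen := aux_length hl
  have h : i - 1 < l.length := by omega
  exact ⟨h, List.getD_eq_getElem l 0 h⟩

theorem aux_entry_mem (hl : IsPermWord n l) {i : ℕ} (h1 : 1 ≤ i) (h2 : i ≤ n) :
    1 ≤ entry l i ∧ entry l i ≤ n := by
  obtain ⟨h, he⟩ := aux_entry_getElem hl h1 h2
  rw [← aux_mem hl, he]
  exact List.getElem_mem h

theorem aux_entry_inj (hl : IsPermWord n l) {i k : ℕ} (hi1 : 1 ≤ i) (hi2 : i ≤ n)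
    (hk1 : 1 ≤ k) (hk2 : k ≤ n) (h : entry l i = entry l k) : i = k := by
  obtain ⟨hb1, he1⟩ := aux_entry_getElem hl hi1 hi2
  obtain ⟨hb2, he2⟩ := aux_entry_getElem hl hk1 hk2
  rw [he1, he2] at h
  have := (List.Nodup.getElem_inj_iff (aux_nodup hl)).mp h
  omega

theorem aux_pos_range (hl : IsPermWord n l) {v : ℕ} (h1 : 1 ≤ v) (h2 : v ≤ n) :
    1 ≤ pos l v ∧ pos l v ≤ n := by
  have hv : v ∈ l := (aux_mem hl v).mpr ⟨h1, h2⟩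
  have := List.idxOf_lt_length_iff.mpr hv
  have hlen := aux_length hl
  unfold pos; omega

theorem aux_entry_pos (hl : IsPermWord n l) {v : ℕ} (h1 : 1 ≤ v) (h2 : v ≤ n) :
    entry l (pos l v) = v := by
  have hv : v ∈ l := (aux_mem hl v).mpr ⟨h1, h2⟩
  have hlt := List.idxOf_lt_length_iff.mpr hv
  have h : pos l v - 1 = l.idxOf v := by unfold pos; omega
  unfold entry
  rw [h, List.getD_eq_getElem l 0 hlt, List.getElem_idxOf]

theorem aux_pos_eq (hl : IsPermWord n l) {i v : ℕ} (hi1 : 1 ≤ i) (hi2 : i ≤ n)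
    (hv1 : 1 ≤ v) (hv2 : v ≤ n) (h : entry l i = v) : pos l v = i := by
  obtain ⟨hp1, hp2⟩ := aux_pos_range hl hv1 hv2
  exact aux_entry_inj hl hp1 hp2 hi1 hi2 (by rw [aux_entry_pos hl hv1 hv2, h])

/-- `w(n+1-w(k)) = k`. -/
theorem aux_qf (hl : IsPermWord n l) (hf : QuarterFixed n l) {k : ℕ}
    (hk1 : 1 ≤ k) (hk2 : k ≤ n) : entry l (n + 1 - entry l k) = k := by
  obtain ⟨he1, he2⟩ := aux_entry_mem hl hk1 hk2
  set i := n + 1 - entry l k with hi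
  have hi1 : 1 ≤ i := by omega
  have hi2 : i ≤ n := by omega
  obtain ⟨hf1, hf2⟩ := aux_entry_mem hl hi1 hi2
  have h1 : entry l (entry l i) = entry l k := by
    rw [hf i hi1 hi2]; omega
  exact aux_entry_inj hl hf1 hf2 hk1 hk2 h1

/-- `pos l k = n+1-w(k)` for quarter-fixed. -/
theorem aux_pos_formula (hl : IsPermWord n l) (hf : QuarterFixed n l) {k : ℕ}
    (hk1 : 1 ≤ k) (hk2 : k ≤ n) : pos l k = n + 1 - entry l k := by
  obtain ⟨he1, he2⟩ := aux_entry_mem hl hk1 hk2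
  exact aux_pos_eq hl (by omega) (by omega) hk1 hk2 (aux_qf hl hf hk1 hk2)

end Aux

/-- For a permutation fixed under quarter-turn rotation, the entry at position
`j` is a right-to-left maximum iff the entry at position `w⁻¹(j)` (the value `j` itself) is
a left-to-right maximum. -/
theorem quarterFixed_rlmax_iff_lrmax (n : ℕ) (l : List ℕ)
    (hl : IsPermWord n l) (hf : QuarterFixed n l) :
    ∀ j, 1 ≤ j → j ≤ n → (RLMaxAt n l j ↔ LRMaxAt l (pos l j)) := by
  intro j hj1 hj2
  obtain ⟨hw1, hw2⟩ := aux_entry_mem hl hj1 hj2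
  have hpf := aux_pos_formula hl hf hj1 hj2
  have hep : entry l (pos l j) = j := aux_entry_pos hl hj1 hj2
  constructor
  · intro hrl i hi1 hi2
    rw [hpf] at hi2
    have hi2' : i ≤ n := by omega
    obtain ⟨hk1, hk2⟩ := aux_entry_mem hl hi1 hi2'
    set k := entry l i with hk
    have hwk : entry l k = n + 1 - i := hf i hi1 hi2'
    have hgt : entry l j < entry l k := by omega
    have hkj : k ≤ j := by
      by_contra h
      exact absurd (hrl k (by omega) hk2) (by omega)
    have hne : k ≠ j := by
      intro h; rw [h] at hwk; omega
    rw [hep]; omega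
  · intro hlr k hk1 hk2
    obtain ⟨hek1, hek2⟩ := aux_entry_mem hl (by omega : 1 ≤ k) hk2
    by_contra h
    have hne : entry l k ≠ entry l j := fun he =>
      absurd (aux_entry_inj hl (by omega) hk2 hj1 hj2 he) (by omega)
    have hgt : entry l j < entry l k := by omega
    set i := n + 1 - entry l k with hi
    have hik : entry l i = k := aux_qf hl hf (by omega) hk2
    have hip : i < pos l j := by omega
    have := hlr i (by omega) hip
    rw [hep, hik] at this
    omega
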